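/- The flux of Shima et al. is not entropy-conservative: for every γ > 1 and every pair of states with common pressure p₋ = p₊ = p, common velocity v₋ = v₊ = v, and ρ₋ ≠ ρ₊, the entropy-conservation defect of the Shima et al. flux f^num equals ⟦w⟧ · f^num(u₋, u₊) − ⟦ψ⟧ = (γ/(γ−1)) v ⟦ρ⟧ ( {ρ}/ρ^log − 1 ); in particular, since {ρ} > ρ^log whenever ρ₋ ≠ ρ₊, this defect is nonzero whenever v ≠ 0, so Tadmor's EC condition fails. -/

import Mathlib

noncomputable section
open Real

/-- A state `u = (ρ, v, p)` of the 1D compressible Euler equations: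
density `u.1`, velocity `u.2.1`, pressure `u.2.2`. -/
abbrev EulerState := ℝ × ℝ × ℝ

/-- Entropy variables `w(u)` for the entropy `U = -ρ s/(γ-1)`, `s = log(p/ρ^γ)`. -/
def entVar (γ : ℝ) (u : EulerState) : EulerState :=
  (γ/(γ-1) - Real.log (u.2.2 / u.1 ^ γ)/(γ-1) - u.1 * u.2.1^2/(2*u.2.2),
   u.1*u.2.1/u.2.2,
   -(u.1/u.2.2))

/-- Euclidean dot product on `ℝ × ℝ × ℝ`. -/
def dot3 (a b : EulerState) : ℝ := a.1*b.1 + a.2.1*b.2.1 + a.2.2*b.2.2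

/-- Logarithmic mean `(a₊ - a₋)/(log a₊ - log a₋)`. -/
def logMean (am ap : ℝ) : ℝ := (ap - am)/(Real.log ap - Real.log am)

/-- The KEP and PEP two-point flux of Shima et al. -/
def shimaFlux (γ : ℝ) (um up : EulerState) : EulerState :=
  (((um.1 + up.1)/2) * ((um.2.1 + up.2.1)/2),
   ((um.1 + up.1)/2) * ((um.2.1 + up.2.1)/2)^2 + (um.2.2 + up.2.2)/2,
   (1/2) * ((um.1 + up.1)/2) * ((um.2.1 + up.2.1)/2) * ((up.2.1*um.2.1 + um.2.1*up.2.1)/2)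
     + (1/(γ-1)) * ((um.2.2 + up.2.2)/2) * ((um.2.1 + up.2.1)/2)
     + (up.2.2*um.2.1 + um.2.2*up.2.1)/2)

lemma lm_lt_am_of_lt {a b : ℝ} (ha : 0 < a) (hab : a < b) :
    logMean a b < (a+b)/2 := by
  have hb : 0 < b := ha.trans hab
  have hL : 0 < Real.log b - Real.log a := sub_pos.mpr (Real.log_lt_log ha hab)
  set g : ℝ → ℝ := fun x => (a+x)*(Real.log x - Real.log a) - 2*(x-a) with hg
  have key : g a < g b := by
    have hmono : StrictMonoOn g (Set.Ici a) := by
      apply strictMonoOn_of_deriv_pos (convex_Ici a)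
      · apply ContinuousOn.sub
        · exact (continuousOn_const.add continuousOn_id).mul
            ((Real.continuousOn_log.mono (by
              intro x hx
              simp only [Set.mem_compl_iff, Set.mem_singleton_iff]
              exact (lt_of_lt_of_le ha hx).ne')).sub continuousOn_const)
        · exact continuousOn_const.mul (continuousOn_id.sub continuousOn_const)
      · intro x hx
        rw [interior_Ici] at hx
        have hx0 : 0 < x := ha.trans hx
        have h1 : HasDerivAt (fun x : ℝ => a + x) 1 x := by
          simpa using (hasDerivAt_id x).const_add a
        have h2 : HasDerivAt (fun x : ℝ => Real.log x - Real.log a) x⁻¹ x :=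
          (Real.hasDerivAt_log hx0.ne').sub_const _
        have h3 := h1.mul h2
        have h4 : HasDerivAt (fun x : ℝ => 2*(x-a)) 2 x := by
          simpa using ((hasDerivAt_id x).sub_const a).const_mul 2
        have hder : HasDerivAt g (1*(Real.log x - Real.log a) + (a+x)*x⁻¹ - 2) x := h3.sub h4
        rw [hder.deriv]
        have hlog : Real.log (a/x) < a/x - 1 :=
          Real.log_lt_sub_one_of_pos (div_pos ha hx0) (by
            intro h
            exact (ne_of_gt (Set.mem_Ioi.mp hx)) (by field_simp at h; linarith))
        rw [Real.log_div ha.ne' hx0.ne'] at hlog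
        have : a/x = a * x⁻¹ := div_eq_mul_inv a x
        nlinarith [mul_pos ha (inv_pos.mpr hx0), mul_inv_cancel₀ hx0.ne']
    exact hmono (Set.self_mem_Ici) (Set.mem_Ici.mpr hab.le) hab
  have hga : g a = 0 := by simp [hg]
  rw [hga] at key
  have key' : 0 < (a+b)*(Real.log b - Real.log a) - 2*(b-a) := by simpa [hg] using key
  rw [logMean, div_lt_iff₀ hL]
  nlinarith

lemma lm_lt_am {a b : ℝ} (ha : 0 < a) (hb : 0 < b) (hne : a ≠ b) :
    logMean a b < (a+b)/2 := by
  rcases hne.lt_or_gt with h | h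
  · exact lm_lt_am_of_lt ha h
  · have := lm_lt_am_of_lt hb h
    have hsym : logMean a b = logMean b a := by
      rw [logMean, logMean, ← neg_div_neg_eq]; ring_nf
    rw [hsym]
    linarith

/-- the flux of Shima et al. is not entropy-conservative. At a
pressure equilibrium with `ρ₋ ≠ ρ₊` the entropy-conservation defect equals
`(γ/(γ-1)) v ⟦ρ⟧ ({ρ}/ρ^log - 1)`; since `{ρ} > ρ^log` whenever `ρ₋ ≠ ρ₊`, the
defect is nonzero whenever `v ≠ 0`, so Tadmor's EC condition fails. -/
theorem shimaFlux_not_entropy_conservative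
    (γ : ℝ) (hγ : 1 < γ) (p v ρm ρp : ℝ)
    (hp : 0 < p) (hρm : 0 < ρm) (hρp : 0 < ρp) (hne : ρm ≠ ρp) :
    (dot3 (entVar γ (ρp, v, p) - entVar γ (ρm, v, p))
        (shimaFlux γ (ρm, v, p) (ρp, v, p)) - (ρp * v - ρm * v)
      = (γ/(γ-1)) * v * (ρp - ρm) * (((ρm + ρp)/2) / logMean ρm ρp - 1))
    ∧ logMean ρm ρp < (ρm + ρp)/2
    ∧ (v ≠ 0 →
        dot3 (entVar γ (ρp, v, p) - entVar γ (ρm, v, p))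
          (shimaFlux γ (ρm, v, p) (ρp, v, p)) - (ρp * v - ρm * v) ≠ 0) := by
  have hγ1 : γ - 1 ≠ 0 := sub_ne_zero.mpr hγ.ne'
  have hL : Real.log ρp - Real.log ρm ≠ 0 := by
    rcases hne.lt_or_gt with h | h
    · exact (sub_pos.mpr (Real.log_lt_log hρm h)).ne'
    · exact (sub_neg.mpr (Real.log_lt_log hρp h)).ne
  have h1 : Real.log (p / ρm ^ γ) = Real.log p - γ * Real.log ρm := by
    rw [Real.log_div hp.ne' (Real.rpow_pos_of_pos hρm γ).ne', Real.log_rpow hρm]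
  have h2 : Real.log (p / ρp ^ γ) = Real.log p - γ * Real.log ρp := by
    rw [Real.log_div hp.ne' (Real.rpow_pos_of_pos hρp γ).ne', Real.log_rpow hρp]
  have hAM : logMean ρm ρp < (ρm + ρp)/2 := lm_lt_am hρm hρp hne
  have hLMpos : 0 < logMean ρm ρp := by
    rcases hne.lt_or_gt with h | h
    · exact div_pos (sub_pos.mpr h) (sub_pos.mpr (Real.log_lt_log hρm h))
    · rw [logMean, show ρp - ρm = -(ρm - ρp) by ring,
        show Real.log ρp - Real.log ρm = -(Real.log ρm - Real.log ρp) by ring, neg_div_neg_eq]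
      exact div_pos (sub_pos.mpr h) (sub_pos.mpr (Real.log_lt_log hρp h))
  have hEq : dot3 (entVar γ (ρp, v, p) - entVar γ (ρm, v, p))
        (shimaFlux γ (ρm, v, p) (ρp, v, p)) - (ρp * v - ρm * v)
      = (γ/(γ-1)) * v * (ρp - ρm) * (((ρm + ρp)/2) / logMean ρm ρp - 1) := by
    have hρd : ρp - ρm ≠ 0 := sub_ne_zero.mpr (Ne.symm hne)
    simp only [dot3, entVar, shimaFlux, logMean, Prod.mk_sub_mk, h1, h2]
    field_simp [hρd]
    ring
  refine ⟨hEq, hAM, fun hv => ?_⟩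
  rw [hEq]
  have hfac : 0 < ((ρm + ρp)/2) / logMean ρm ρp - 1 := by
    rw [lt_sub_iff_add_lt, zero_add, lt_div_iff₀ hLMpos, one_mul]
    exact hAM
  have hγpos : 0 < γ/(γ-1) := div_pos (by linarith) (by linarith)
  exact mul_ne_zero (mul_ne_zero (mul_ne_zero hγpos.ne' hv) (sub_ne_zero.mpr (Ne.symm hne))) hfac.ne'
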